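/- Let n ≥ 1, let m ≥ 1, let x^1, …, x^m : [n] → [n] be arbitrary codes (color repetitions allowed), and let y be a permutation of [n] such that |{i ∈ [n] : y(i) = x^m(i)}| ≥ m + 1. Then there exists a permutation z of [n] with z ≠ y such that for every position i with z(i) ≠ y(i) one has y(i) = x^m(i) and z(i) ≠ x^ℓ(i) for all ℓ ∈ [m]. Consequently black(z, x^m) < black(y, x^m) and black(z, x^j) ≤ black(y, x^j) for every j ∈ [m−1]. -/

import Mathlib

/-- `black w x` is the number of positions where the codes `w` and `x` coincide. -/
def black {n k : ℕ} (w x : Fin n → Fin k) : ℕ :=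
  (Finset.univ.filter fun i => w i = x i).card

theorem stmt8 (n : ℕ) (hn : 1 ≤ n) (m : ℕ) (hm : 1 ≤ m)
    (x : ℕ → Fin n → Fin n)  -- the queries `x^1, …, x^m` (values at `0` irrelevant)
    (y : Equiv.Perm (Fin n)) (hy : m + 1 ≤ black ⇑y (x m)) :
    ∃ z : Equiv.Perm (Fin n), z ≠ y ∧
      (∀ i, z i ≠ y i → y i = x m i ∧ ∀ ℓ ∈ Finset.Icc 1 m, z i ≠ x ℓ i) ∧
      black ⇑z (x m) < black ⇑y (x m) ∧
      (∀ j ∈ Finset.Icc 1 (m - 1), black ⇑z (x j) ≤ black ⇑y (x j)) := by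
  classical
  unfold black at hy ⊢
  set S : Finset (Fin n) := Finset.univ.filter (fun i => y i = x m i) with hSdef
  have hS : m + 1 ≤ S.card := hy
  have hmm : m ∈ Finset.Icc 1 m := Finset.mem_Icc.mpr ⟨hm, le_refl m⟩
  have hSm : ∀ i ∈ S, y i = x m i := by
    intro i hi
    exact (Finset.mem_filter.mp hi).2
  -- the set of allowed targets is nonempty
  have hA : ∀ i ∈ S, (S.filter fun j => ∀ ℓ ∈ Finset.Icc 1 m, y j ≠ x ℓ i).Nonempty := by
    intro i hi
    by_contra h
    rw [Finset.not_nonempty_iff_eq_empty, @Finset.filter_eq_empty_iff _ _ (fun _ => Classical.propDecidable _)] at h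
    have hsub : S ⊆ (Finset.Icc 1 m).image (fun ℓ => y.symm (x ℓ i)) := by
      intro j hj
      have hj' := h hj
      push_neg at hj'
      obtain ⟨ℓ, hℓ, hEq⟩ := hj'
      exact Finset.mem_image.mpr ⟨ℓ, hℓ, by simp [← hEq]⟩
    have h1 := Finset.card_le_card hsub
    have h2 := Finset.card_image_le (s := Finset.Icc 1 m) (f := fun ℓ => y.symm (x ℓ i))
    simp only [Nat.card_Icc] at h2
    omega
  -- choose the successor function
  set F : Fin n → Fin n := fun i => if h : i ∈ S then (hA i h).choose else i with hFdef
  have hFmem : ∀ i ∈ S, F i ∈ S.filter fun j => ∀ ℓ ∈ Finset.Icc 1 m, y j ≠ x ℓ i := by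
    intro i hi
    simp only [hFdef, dif_pos hi]
    exact (hA i hi).choose_spec
  have hFS : ∀ i ∈ S, F i ∈ S := fun i hi => ((@Finset.mem_filter _ _ (fun _ => Classical.propDecidable _) _ _).mp (hFmem i hi)).1
  have hFx : ∀ i ∈ S, ∀ ℓ ∈ Finset.Icc 1 m, y (F i) ≠ x ℓ i :=
    fun i hi => ((@Finset.mem_filter _ _ (fun _ => Classical.propDecidable _) _ _).mp (hFmem i hi)).2
  have hFne : ∀ i ∈ S, F i ≠ i := by
    intro i hi h
    have h1 := hFx i hi m hmm
    rw [h] at h1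
    exact h1 (hSm i hi)
  -- find a cycle in the orbit of F
  have hS0 : S.Nonempty := Finset.card_pos.mp (by omega)
  obtain ⟨i₀, hi₀⟩ := hS0
  have horb : ∀ k, F^[k] i₀ ∈ S := by
    intro k
    induction k with
    | zero => simpa using hi₀
    | succ k ih => rw [Function.iterate_succ_apply']; exact hFS _ ih
  have key : ∃ a b : ℕ, a < b ∧ F^[a] i₀ = F^[b] i₀ := by
    obtain ⟨a, b, hab, heq⟩ := Finite.exists_ne_map_eq_of_infinite (fun k => F^[k] i₀)
    rcases lt_or_gt_of_ne hab with h | h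
    · exact ⟨a, b, h, heq⟩
    · exact ⟨b, a, h, heq.symm⟩
  obtain ⟨a, b, hab, heq⟩ := key
  set j : Fin n := F^[a] i₀ with hjdef
  set p : ℕ := b - a with hpdef
  have hp0 : 0 < p := by omega
  have hcyc : F^[p] j = j := by
    rw [hjdef, ← Function.iterate_add_apply]
    have hba : p + a = b := by omega
    rw [hba, ← heq]
  set C : Finset (Fin n) := (Finset.range p).image (fun k => F^[k] j) with hCdef
  have hjC : j ∈ C := Finset.mem_image.mpr ⟨0, Finset.mem_range.mpr hp0, rfl⟩
  have hCS : ∀ c ∈ C, c ∈ S := by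
    intro c hc
    obtain ⟨k, _, rfl⟩ := Finset.mem_image.mp hc
    rw [hjdef, ← Function.iterate_add_apply]
    exact horb _
  have hFC : ∀ c ∈ C, F c ∈ C := by
    intro c hc
    obtain ⟨k, hk, rfl⟩ := Finset.mem_image.mp hc
    have hstep : F (F^[k] j) = F^[k + 1] j := (Function.iterate_succ_apply' F k j).symm
    rw [hstep]
    rw [Finset.mem_range] at hk
    rcases Nat.lt_or_ge (k + 1) p with h | h
    · exact Finset.mem_image.mpr ⟨k + 1, Finset.mem_range.mpr h, rfl⟩
    · have hkp : k + 1 = p := by omega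
      rw [hkp, hcyc]
      exact hjC
  have hCsurj : ∀ c ∈ C, ∃ d ∈ C, F d = c := by
    intro c hc
    obtain ⟨k, hk, rfl⟩ := Finset.mem_image.mp hc
    rw [Finset.mem_range] at hk
    rcases Nat.eq_zero_or_pos k with rfl | hk0
    · refine ⟨F^[p - 1] j, Finset.mem_image.mpr ⟨p - 1, Finset.mem_range.mpr (by omega), rfl⟩, ?_⟩
      have hstep : F (F^[p - 1] j) = F^[p - 1 + 1] j := (Function.iterate_succ_apply' F _ j).symm
      rw [hstep]
      have : p - 1 + 1 = p := by omega
      rw [this, hcyc]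
      simp
    · refine ⟨F^[k - 1] j, Finset.mem_image.mpr ⟨k - 1, Finset.mem_range.mpr (by omega), rfl⟩, ?_⟩
      have hstep : F (F^[k - 1] j) = F^[k - 1 + 1] j := (Function.iterate_succ_apply' F _ j).symm
      rw [hstep]
      have : k - 1 + 1 = k := by omega
      rw [this]
  have himg : C.image F = C := by
    apply Finset.Subset.antisymm
    · intro c hc
      obtain ⟨d, hd, rfl⟩ := Finset.mem_image.mp hc
      exact hFC d hd
    · intro c hc
      obtain ⟨d, hd, hdc⟩ := hCsurj c hc
      exact Finset.mem_image.mpr ⟨d, hd, hdc⟩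
  have hinjC : Set.InjOn F ↑C := Finset.injOn_of_card_image_eq (by rw [himg])
  -- the modified function and the permutation
  set g : Fin n → Fin n := fun i => if i ∈ C then F i else i with hgdef
  have hginj : Function.Injective g := by
    intro i₁ i₂ h
    simp only [hgdef] at h
    by_cases h1 : i₁ ∈ C <;> by_cases h2 : i₂ ∈ C
    · rw [if_pos h1, if_pos h2] at h
      exact hinjC (Finset.mem_coe.mpr h1) (Finset.mem_coe.mpr h2) h
    · rw [if_pos h1, if_neg h2] at h
      exact absurd (h ▸ hFC i₁ h1) h2
    · rw [if_neg h1, if_pos h2] at h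
      subst h
      exact absurd (hFC i₂ h2) h1
    · rw [if_neg h1, if_neg h2] at h
      exact h
  have hgbij : Function.Bijective g := Finite.injective_iff_bijective.mp hginj
  set e : Equiv.Perm (Fin n) := Equiv.ofBijective g hgbij with hedef
  refine ⟨e.trans y, ?_, ?_, ?_, ?_⟩
  case refine_2 =>
    intro i hi
    have heval : (e.trans y) i = y (g i) := rfl
    have hiC : i ∈ C := by
      by_contra h
      apply hi
      rw [heval, hgdef]
      simp [h]
    have hgi : g i = F i := if_pos hiC
    have hiS : i ∈ S := hCS i hiC
    refine ⟨hSm i hiS, ?_⟩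
    intro ℓ hℓ
    rw [heval, hgi]
    exact hFx i hiS ℓ hℓ
  all_goals
    have hzj : (e.trans y) j ≠ y j := by
      have heval : (e.trans y) j = y (g j) := rfl
      have hgj : g j = F j := if_pos hjC
      rw [heval, hgj]
      intro h
      exact hFne j (hCS j hjC) (y.injective h)
  case refine_1 =>
    intro h
    exact hzj (by rw [h])
  all_goals
    have hkey : ∀ i, (e.trans y) i ≠ y i →
        y i = x m i ∧ ∀ ℓ ∈ Finset.Icc 1 m, (e.trans y) i ≠ x ℓ i := by
      intro i hi
      have heval : (e.trans y) i = y (g i) := rfl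
      have hiC : i ∈ C := by
        by_contra h
        apply hi
        rw [heval, hgdef]
        simp [h]
      have hgi : g i = F i := if_pos hiC
      have hiS : i ∈ S := hCS i hiC
      refine ⟨hSm i hiS, ?_⟩
      intro ℓ hℓ
      rw [heval, hgi]
      exact hFx i hiS ℓ hℓ
  case refine_3 =>
    apply Finset.card_lt_card
    constructor
    · intro i hi
      simp only [Finset.mem_filter, Finset.mem_univ, true_and] at hi
      rw [hSdef]
      simp only [Finset.mem_filter, Finset.mem_univ, true_and]
      by_cases h : (e.trans y) i = y i
      · rw [← h]; exact hi
      · exact absurd hi ((hkey i h).2 m hmm)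
    · intro hsub
      have hjS : j ∈ S := hCS j hjC
      have hjz := hsub hjS
      simp only [Finset.mem_filter, Finset.mem_univ, true_and] at hjz
      exact (hkey j hzj).2 m hmm hjz
  case refine_4 =>
    intro q hq
    apply Finset.card_le_card
    intro i hi
    simp only [Finset.mem_filter, Finset.mem_univ, true_and] at hi ⊢
    by_cases h : (e.trans y) i = y i
    · rw [← h]; exact hi
    · have hq' : q ∈ Finset.Icc 1 m := by
        rw [Finset.mem_Icc] at hq ⊢
        omega
      exact absurd hi ((hkey i h).2 q hq')
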